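/- arXiv:2008.00560 — 17 statements merged into one kernel-verified Lean document; each statement's English description precedes it below -/
import Mathlib

section
/- Let A be a nonassociative algebra over a field K of characteristic 0 with bilinear multiplication ∗. For each X ∈ A, the endomorphism L_X − R_X defined by (L_X − R_X)(Y) = X∗Y − Y∗X is a derivation of (A,∗) for every X ∈ A if and only if (A,∗) is weakly associative. -/
/-- For a nonassociative algebra `(A, ∗)` over a field `K` of characteristic zero,
the endomorphism `L_X − R_X : Y ↦ X∗Y − Y∗X` is a derivation for every `X`
if and only if `(A, ∗)` is weakly associative. -/
theorem stmt_0 {K A : Type*} [Field K] [CharZero K] [AddCommGroup A] [Module K A]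
    (mul : A →ₗ[K] A →ₗ[K] A) :
    (∀ X Y Z : A,
      mul X (mul Y Z) - mul (mul Y Z) X =
        mul (mul X Y - mul Y X) Z + mul Y (mul X Z - mul Z X)) ↔
    (∀ X Y Z : A,
      (mul X (mul Y Z) - mul (mul X Y) Z)
        + (mul Y (mul Z X) - mul (mul Y Z) X)
        - (mul Y (mul X Z) - mul (mul Y X) Z) = 0) := by
  constructor <;> intro h X Y Z <;> have := h X Y Z <;>
    simp only [map_sub, LinearMap.sub_apply] at this ⊢ <;> linear_combination (norm := module) this
end

section
/- Let (A, •, [ , ]) be a nonassociative Poisson algebra over a field K of characteristic 0, and define on A the multiplication X∗Y = X•Y + [X,Y] (the depolarization). Then the algebra (A,∗) is weakly associative. -/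
/-- The depolarization `X ∗ Y = X • Y + [X, Y]` of a nonassociative Poisson algebra
is weakly associative. -/
theorem stmt_2 {K A : Type*} [Field K] [CharZero K] [AddCommGroup A] [Module K A]
    (dot br : A →ₗ[K] A →ₗ[K] A)
    (hcomm : ∀ X Y : A, dot X Y = dot Y X)
    (hskew : ∀ X Y : A, br X Y = - br Y X)
    (hjacobi : ∀ X Y Z : A, br (br X Y) Z + br (br Y Z) X + br (br Z X) Y = 0)
    (hleibniz : ∀ X Y Z : A, br (dot X Y) Z = dot X (br Y Z) + dot (br X Z) Y)
    (star : A → A → A)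
    (hstar : ∀ X Y : A, star X Y = dot X Y + br X Y) :
    ∀ X Y Z : A,
      (star X (star Y Z) - star (star X Y) Z)
        + (star Y (star Z X) - star (star Y Z) X)
        - (star Y (star X Z) - star (star Y X) Z) = 0 := by
  intro X Y Z
  have r1 : br X (dot Y Z) = dot (br X Y) Z - dot Y (br Z X) := by
    rw [hskew X (dot Y Z), hleibniz Y Z X, hskew Y X]
    simp only [map_neg, LinearMap.neg_apply]
    abel
  have r2 : br Y (dot Z X) = dot (br Y Z) X - dot Z (br X Y) := by
    rw [hskew Y (dot Z X), hleibniz Z X Y, hskew Z Y]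
    simp only [map_neg, LinearMap.neg_apply]
    abel
  have r3 : br Y (dot X Z) = dot X (br Y Z) - dot (br X Y) Z := by
    rw [hskew Y (dot X Z), hleibniz X Z Y, hskew Z Y]
    simp only [map_neg, LinearMap.neg_apply]
    abel
  have d1 : dot (dot Y Z) X = dot X (dot Y Z) := hcomm _ _
  have d2 : dot (dot Y X) Z = dot (dot X Y) Z := by rw [hcomm Y X]
  have d3 : dot Y (dot Z X) = dot Y (dot X Z) := by rw [hcomm Z X]
  have d4 : dot (br Y Z) X = dot X (br Y Z) := hcomm _ _
  have d5 : dot (br Y X) Z = - dot (br X Y) Z := by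
    rw [hskew Y X]; simp only [map_neg, LinearMap.neg_apply]
  have d6 : dot Y (br X Z) = - dot Y (br Z X) := by
    rw [hskew X Z]; simp only [map_neg]
  have d7 : dot (br X Z) Y = - dot Y (br Z X) := by
    rw [hcomm, hskew X Z]; simp only [map_neg]
  have d8 : dot Z (br X Y) = dot (br X Y) Z := hcomm _ _
  have b1 : br X (br Y Z) = - br (br Y Z) X := hskew _ _
  have b2 : br Y (br Z X) = - br (br Z X) Y := hskew _ _
  have b3 : br Y (br X Z) = br (br Z X) Y := by
    rw [hskew Y (br X Z), hskew X Z]; simp only [map_neg, LinearMap.neg_apply, neg_neg]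
  have b4 : br (br Y X) Z = - br (br X Y) Z := by
    rw [hskew Y X]; simp only [map_neg, LinearMap.neg_apply]
  have b5 : br (br X Y) Z = -(br (br Y Z) X + br (br Z X) Y) :=
    eq_neg_of_add_eq_zero_left (by rw [← add_assoc]; exact hjacobi X Y Z)
  simp only [hstar, map_add, LinearMap.add_apply]
  rw [r1, r2, r3, hleibniz X Y Z, hleibniz Y Z X, hleibniz Y X Z]
  rw [d1, d2, d3, d4, d5, d7, d6, d8, b1, b2, b3, b4, b5]
  abel
end

section
/- Let (A,∗) be a weakly associative algebra over a field K of characteristic 0, and let (A, •, [ , ]) be its polarization, i.e. X•Y = (X∗Y + Y∗X)/2 and [X,Y] = (X∗Y − Y∗X)/2. Then (A, •, [ , ]) is a nonassociative Poisson algebra: • is commutative, [ , ] is a Lie bracket, and the Leibniz identity [X•Y,Z] = X•[Y,Z] + [X,Z]•Y holds for all X,Y,Z ∈ A. -/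
/-- The polarization of a weakly associative algebra is a nonassociative Poisson algebra. -/
theorem stmt_3 {K A : Type*} [Field K] [CharZero K] [AddCommGroup A] [Module K A]
    (star : A →ₗ[K] A →ₗ[K] A)
    (hWA : ∀ X Y Z : A,
      (star X (star Y Z) - star (star X Y) Z)
        + (star Y (star Z X) - star (star Y Z) X)
        - (star Y (star X Z) - star (star Y X) Z) = 0)
    (dot br : A → A → A)
    (hdot : ∀ X Y : A, dot X Y = (2 : K)⁻¹ • (star X Y + star Y X))
    (hbr : ∀ X Y : A, br X Y = (2 : K)⁻¹ • (star X Y - star Y X)) :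
    (∀ X Y : A, dot X Y = dot Y X) ∧
    (∀ X Y : A, br X Y = - br Y X) ∧
    (∀ X Y Z : A, br (br X Y) Z + br (br Y Z) X + br (br Z X) Y = 0) ∧
    (∀ X Y Z : A, br (dot X Y) Z = dot X (br Y Z) + dot (br X Z) Y) := by
  refine ⟨?_, ?_, ?_, ?_⟩
  · intro X Y
    rw [hdot, hdot]; module
  · intro X Y
    rw [hbr, hbr]; module
  · intro X Y Z
    simp only [hbr, map_smul, map_sub, map_add, LinearMap.smul_apply, LinearMap.sub_apply,
      LinearMap.add_apply]
    linear_combination (norm := module)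
      ((2:K)⁻¹ * (2:K)⁻¹) • hWA X Z Y - ((2:K)⁻¹ * (2:K)⁻¹) • hWA X Y Z
  · intro X Y Z
    simp only [hbr, hdot, map_smul, map_sub, map_add, LinearMap.smul_apply, LinearMap.sub_apply,
      LinearMap.add_apply]
    linear_combination (norm := module)
      ((2:K)⁻¹ * (2:K)⁻¹) • hWA X Y Z - ((2:K)⁻¹ * (2:K)⁻¹) • hWA X Z Y
        - ((2:K)⁻¹ * (2:K)⁻¹ * 2) • hWA Z X Y
end

section
/- A nonassociative algebra (A,∗) over a field K of characteristic 0 is a symmetric Leibniz algebra if and only if for all X,Y,Z ∈ A its associator satisfies A∗(X,Y,Z) = Y∗(X∗Z) and the trilinear map B∗ vanishes: X∗(Y∗Z) + (Y∗Z)∗X = 0. -/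
/-- `(A, ∗)` is a symmetric Leibniz algebra iff its associator satisfies
`A∗(X,Y,Z) = Y∗(X∗Z)` and `B∗(X,Y,Z) = X∗(Y∗Z) + (Y∗Z)∗X = 0` for all `X, Y, Z`. -/
theorem stmt_6 {K A : Type*} [Field K] [CharZero K] [AddCommGroup A] [Module K A]
    (mul : A →ₗ[K] A →ₗ[K] A) :
    ((∀ X Y Z : A, mul X (mul Y Z) = mul (mul X Y) Z + mul Y (mul X Z)) ∧
     (∀ X Y Z : A, mul (mul Y Z) X = mul (mul Y X) Z + mul Y (mul Z X))) ↔
    ((∀ X Y Z : A, mul X (mul Y Z) - mul (mul X Y) Z = mul Y (mul X Z)) ∧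
     (∀ X Y Z : A, mul X (mul Y Z) + mul (mul Y Z) X = 0)) := by
  constructor
  · rintro ⟨hL, hR⟩
    have hsqL : ∀ a c : A, mul (mul a a) c = 0 := fun a c =>
      (right_eq_add.mp (hL a a c)).symm ▸ rfl
    have hsqR : ∀ a c : A, mul c (mul a a) = 0 := fun a c =>
      (left_eq_add.mp (hR a c a))
    have hpolL : ∀ a b c : A, mul (mul a b) c + mul (mul b a) c = 0 := by
      intro a b c
      have h := hsqL (a + b) c
      simp only [map_add, LinearMap.add_apply] at h
      rw [hsqL a c, hsqL b c] at h
      abel_nf at h ⊢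
      linear_combination (norm := abel) h
    have hpolR : ∀ a b c : A, mul c (mul a b) + mul c (mul b a) = 0 := by
      intro a b c
      have h := hsqR (a + b) c
      simp only [map_add, LinearMap.add_apply] at h
      rw [hsqR a c, hsqR b c] at h
      linear_combination (norm := abel) h
    refine ⟨fun X Y Z => by rw [hL X Y Z]; abel, fun X Y Z => ?_⟩
    rw [hL X Y Z, hR X Y Z]
    linear_combination (norm := abel) hpolL X Y Z + hpolR X Z Y
  · rintro ⟨hA, hB⟩
    have hL : ∀ X Y Z : A, mul X (mul Y Z) = mul (mul X Y) Z + mul Y (mul X Z) := by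
      intro X Y Z
      linear_combination (norm := abel) hA X Y Z
    refine ⟨hL, fun X Y Z => ?_⟩
    linear_combination (norm := abel) hB X Y Z - hL X Y Z - hB Z Y X + hL Z Y X +
      hB X Z Y - hL X Z Y - hB Z X Y - hB Y X Z
end

section
/- Every symmetric Leibniz algebra over a field K of characteristic 0 is weakly associative. -/
/-- Every symmetric Leibniz algebra over a field of characteristic zero
is weakly associative. -/
theorem stmt_7 {K A : Type*} [Field K] [CharZero K] [AddCommGroup A] [Module K A]
    (mul : A →ₗ[K] A →ₗ[K] A)
    (hL1 : ∀ X Y Z : A, mul X (mul Y Z) = mul (mul X Y) Z + mul Y (mul X Z))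
    (hL2 : ∀ X Y Z : A, mul (mul Y Z) X = mul (mul Y X) Z + mul Y (mul Z X)) :
    ∀ X Y Z : A,
      (mul X (mul Y Z) - mul (mul X Y) Z)
        + (mul Y (mul Z X) - mul (mul Y Z) X)
        - (mul Y (mul X Z) - mul (mul Y X) Z) = 0 := by
  intro X Y Z
  rw [hL1 X Y Z, hL2 X Y Z, hL1 Y X Z]
  abel
end

section
/- Let (A,∗) be a symmetric Leibniz algebra over a field K of characteristic 0 and let (A, •, [ , ]) be its polarization, X•Y = (X∗Y + Y∗X)/2 and [X,Y] = (X∗Y − Y∗X)/2. Then (A, •, [ , ]) is a Poisson algebra: • is commutative and associative, [ , ] is a Lie bracket, and the Leibniz identity [X•Y,Z] = X•[Y,Z] + [X,Z]•Y holds for all X,Y,Z ∈ A. -/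
/-- The polarization of a symmetric Leibniz algebra is a Poisson algebra:
`•` is commutative and associative, `[ , ]` is a Lie bracket, and the
Leibniz identity holds. -/
theorem stmt_8 {K A : Type*} [Field K] [CharZero K] [AddCommGroup A] [Module K A]
    (mul : A →ₗ[K] A →ₗ[K] A)
    (hL1 : ∀ X Y Z : A, mul X (mul Y Z) = mul (mul X Y) Z + mul Y (mul X Z))
    (hL2 : ∀ X Y Z : A, mul (mul Y Z) X = mul (mul Y X) Z + mul Y (mul Z X))
    (dot br : A → A → A)
    (hdot : ∀ X Y : A, dot X Y = (2 : K)⁻¹ • (mul X Y + mul Y X))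
    (hbr : ∀ X Y : A, br X Y = (2 : K)⁻¹ • (mul X Y - mul Y X)) :
    (∀ X Y : A, dot X Y = dot Y X) ∧
    (∀ X Y Z : A, dot X (dot Y Z) = dot (dot X Y) Z) ∧
    (∀ X Y : A, br X Y = - br Y X) ∧
    (∀ X Y Z : A, br (br X Y) Z + br (br Y Z) X + br (br Z X) Y = 0) ∧
    (∀ X Y Z : A, br (dot X Y) Z = dot X (br Y Z) + dot (br X Z) Y) := by
  refine ⟨?_, ?_, ?_, ?_, ?_⟩
  · intro X Y
    rw [hdot, hdot]
    module
  · intro X Y Z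
    simp only [hdot, map_add, map_smul, LinearMap.add_apply, LinearMap.smul_apply]
    linear_combination (norm := module)
      ((2:K)⁻¹ * (2:K)⁻¹) • (hL2 X Y Z + hL1 X Z Y - hL2 Z X Y - hL1 Z Y X)
  · intro X Y
    rw [hbr, hbr]
    module
  · intro X Y Z
    simp only [hbr, map_sub, map_smul, LinearMap.sub_apply, LinearMap.smul_apply]
    linear_combination (norm := module)
      ((2:K)⁻¹ * (2:K)⁻¹) • (hL2 X Y Z - hL1 X Y Z + hL1 X Z Y - hL2 X Z Y)
  · intro X Y Z
    simp only [hdot, hbr, map_add, map_sub, map_smul, LinearMap.add_apply,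
      LinearMap.sub_apply, LinearMap.smul_apply]
    linear_combination (norm := module)
      ((2:K)⁻¹ * (2:K)⁻¹) • (hL1 X Y Z - hL2 X Y Z - hL1 X Z Y + hL2 X Z Y
        - (2:K) • hL1 Z X Y + (2:K) • hL2 Z X Y)
end

section
/- Let (A,∗) be a symmetric Leibniz algebra over a field K of characteristic 0 and let X•Y = (X∗Y + Y∗X)/2 be its polarized commutative product. Then X•(Y•Z) = 0 for all X,Y,Z ∈ A; in particular the commutative associative algebra (A,•) is two-step nilpotent. -/
/-- For a symmetric Leibniz algebra, the polarized commutative product `•` satisfies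
`X • (Y • Z) = 0` for all `X, Y, Z`; in particular `(A, •)` is two-step nilpotent. -/
theorem stmt_9 {K A : Type*} [Field K] [CharZero K] [AddCommGroup A] [Module K A]
    (mul : A →ₗ[K] A →ₗ[K] A)
    (hL1 : ∀ X Y Z : A, mul X (mul Y Z) = mul (mul X Y) Z + mul Y (mul X Z))
    (hL2 : ∀ X Y Z : A, mul (mul Y Z) X = mul (mul Y X) Z + mul Y (mul Z X))
    (dot : A → A → A)
    (hdot : ∀ X Y : A, dot X Y = (2 : K)⁻¹ • (mul X Y + mul Y X)) :
    ∀ X Y Z : A, dot X (dot Y Z) = 0 := by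
  intro X Y Z
  -- left annihilation: X ∗ (Y∗Z) + X ∗ (Z∗Y) = 0
  have h1 : mul X (mul Y Z) + mul X (mul Z Y) = 0 := by
    have a := hL2 Z X Y
    have b := hL2 Y X Z
    rw [b] at a
    rw [add_assoc, left_eq_add] at a
    rw [add_comm]; exact a
  -- right annihilation: (Y∗Z) ∗ X + (Z∗Y) ∗ X = 0
  have h2 : mul (mul Y Z) X + mul (mul Z Y) X = 0 := by
    have a := hL1 Y Z X
    have b := hL1 Z Y X
    rw [b] at a
    rw [← add_assoc, right_eq_add] at a
    exact a
  have hXw : mul X (mul Y Z + mul Z Y) = 0 := by rw [map_add]; exact h1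
  have hwX : mul (mul Y Z + mul Z Y) X = 0 := by
    rw [map_add, LinearMap.add_apply]; exact h2
  rw [hdot, hdot, map_smul, LinearMap.map_smul₂, hXw, hwX]
  simp
end

section
/- Let (A,∗) be a symmetric Leibniz algebra over a field K of characteristic 0 with polarization X•Y = (X∗Y + Y∗X)/2 and [X,Y] = (X∗Y − Y∗X)/2. Then X•[Y,Z] = 0 for all X,Y,Z ∈ A; that is, the derived Lie subalgebra [A,A] is contained in the annihilator (center) of the commutative algebra (A,•). -/
/-- For a symmetric Leibniz algebra with polarization `(•, [ , ])`, one has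
`X • [Y, Z] = 0` for all `X, Y, Z`. -/
theorem stmt_10 {K A : Type*} [Field K] [CharZero K] [AddCommGroup A] [Module K A]
    (mul : A →ₗ[K] A →ₗ[K] A)
    (hL1 : ∀ X Y Z : A, mul X (mul Y Z) = mul (mul X Y) Z + mul Y (mul X Z))
    (hL2 : ∀ X Y Z : A, mul (mul Y Z) X = mul (mul Y X) Z + mul Y (mul Z X))
    (dot br : A → A → A)
    (hdot : ∀ X Y : A, dot X Y = (2 : K)⁻¹ • (mul X Y + mul Y X))
    (hbr : ∀ X Y : A, br X Y = (2 : K)⁻¹ • (mul X Y - mul Y X)) :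
    ∀ X Y Z : A, dot X (br Y Z) = 0 := by
  have key : ∀ U V W : A, mul U (mul V W) + mul (mul V W) U = 0 := by
    intro U V W
    have h1 := hL1 V U W
    have h2 := hL2 W V U
    rw [h2] at h1
    -- h1 : mul V (mul U W) = (mul (mul V W) U + mul V (mul U W)) + mul U (mul V W)
    have : mul U (mul V W) + mul (mul V W) U =
        ((mul (mul V W) U + mul V (mul U W)) + mul U (mul V W)) - mul V (mul U W) := by
      abel
    rw [this, ← h1, sub_self]
  intro X Y Z
  rw [hdot, hbr]
  have e1 : mul X ((2 : K)⁻¹ • (mul Y Z - mul Z Y)) =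
      (2 : K)⁻¹ • (mul X (mul Y Z) - mul X (mul Z Y)) := by
    rw [map_smul, map_sub]
  have e2 : mul ((2 : K)⁻¹ • (mul Y Z - mul Z Y)) X =
      (2 : K)⁻¹ • (mul (mul Y Z) X - mul (mul Z Y) X) := by
    rw [map_smul, map_sub, LinearMap.smul_apply, LinearMap.sub_apply]
  rw [e1, e2, ← smul_add]
  have : (mul X (mul Y Z) - mul X (mul Z Y)) + (mul (mul Y Z) X - mul (mul Z Y) X) =
      (mul X (mul Y Z) + mul (mul Y Z) X) - (mul X (mul Z Y) + mul (mul Z Y) X) := by abel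
  rw [this, key X Y Z, key X Z Y, sub_self, smul_zero, smul_zero]
end

section
/- Let (A,∗) be a symmetric Leibniz algebra over a field K of characteristic 0 with polarization X•Y = (X∗Y + Y∗X)/2 and [X,Y] = (X∗Y − Y∗X)/2. Then [X, Y•Z] = 0 for all X,Y,Z ∈ A. -/
/-- For a symmetric Leibniz algebra with polarization `(•, [ , ])`, one has
`[X, Y • Z] = 0` for all `X, Y, Z`. -/
theorem stmt_11 {K A : Type*} [Field K] [CharZero K] [AddCommGroup A] [Module K A]
    (mul : A →ₗ[K] A →ₗ[K] A)
    (hL1 : ∀ X Y Z : A, mul X (mul Y Z) = mul (mul X Y) Z + mul Y (mul X Z))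
    (hL2 : ∀ X Y Z : A, mul (mul Y Z) X = mul (mul Y X) Z + mul Y (mul Z X))
    (dot br : A → A → A)
    (hdot : ∀ X Y : A, dot X Y = (2 : K)⁻¹ • (mul X Y + mul Y X))
    (hbr : ∀ X Y : A, br X Y = (2 : K)⁻¹ • (mul X Y - mul Y X)) :
    ∀ X Y Z : A, br X (dot Y Z) = 0 := by
  intro X Y Z
  have h1 : mul X (mul Y Z) + mul X (mul Z Y) = 0 := by
    have b := hL2 Y X Z
    rw [hL2 Z X Y, add_assoc] at b
    exact left_eq_add.mp b
  have h2 : mul (mul Y Z) X + mul (mul Z Y) X = 0 := by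
    have a := hL1 Y Z X
    rw [hL1 Z Y X] at a
    -- a : mul Y (mul Z X) = mul (mul Y Z) X + (mul (mul Z Y) X + mul Y (mul Z X))
    rw [add_comm (mul (mul Z Y) X) (mul Y (mul Z X)), ← add_assoc,
      add_comm (mul (mul Y Z) X) (mul Y (mul Z X)), add_assoc] at a
    exact left_eq_add.mp a
  have e1 : mul X ((2 : K)⁻¹ • (mul Y Z + mul Z Y)) = 0 := by
    rw [map_smul, map_add, h1, smul_zero]
  have e2 : mul ((2 : K)⁻¹ • (mul Y Z + mul Z Y)) X = 0 := by
    rw [map_smul, map_add, LinearMap.smul_apply, LinearMap.add_apply, h2, smul_zero]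
  rw [hbr, hdot, e1, e2, sub_zero, smul_zero]
end

section
/- Let (A,∗) be a symmetric Leibniz algebra over a field K of characteristic 0 and let [X,Y] = (X∗Y − Y∗X)/2 be its polarized skew-symmetric product. Then [ , ] satisfies the Jacobi identity [[X,Y],Z] + [[Y,Z],X] + [[Z,X],Y] = 0 for all X,Y,Z ∈ A; that is, (A,∗) is Lie-admissible. -/
/-- The polarized skew-symmetric product of a symmetric Leibniz algebra satisfies
the Jacobi identity; that is, symmetric Leibniz algebras are Lie-admissible. -/
theorem stmt_12 {K A : Type*} [Field K] [CharZero K] [AddCommGroup A] [Module K A]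
    (mul : A →ₗ[K] A →ₗ[K] A)
    (hL1 : ∀ X Y Z : A, mul X (mul Y Z) = mul (mul X Y) Z + mul Y (mul X Z))
    (hL2 : ∀ X Y Z : A, mul (mul Y Z) X = mul (mul Y X) Z + mul Y (mul Z X))
    (br : A → A → A)
    (hbr : ∀ X Y : A, br X Y = (2 : K)⁻¹ • (mul X Y - mul Y X)) :
    ∀ X Y Z : A, br (br X Y) Z + br (br Y Z) X + br (br Z X) Y = 0 := by
  intro X Y Z
  simp only [hbr, map_sub, map_smul, LinearMap.sub_apply, LinearMap.smul_apply, smul_sub]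
  linear_combination (norm := module)
    ((4:K)⁻¹) • (hL1 Z Y X - hL1 Z X Y + hL2 Z X Y - hL2 Z Y X)
end

section
/- Let A be a K-vector space over a field K of characteristic 0 with a bilinear multiplication ∗, and let X•Y = (X∗Y + Y∗X)/2 and [X,Y] = (X∗Y − Y∗X)/2 be its polarization. Then (A,∗) is a symmetric Leibniz algebra if and only if the following conditions hold for all X,Y,Z ∈ A: (1) X•(Y•Z) = 0; (2) [ , ] satisfies the Jacobi identity; (3) [X, Y•Z] = 0 and X•[Y,Z] = 0. -/
/-- Structure theorem: `(A, ∗)` is a symmetric Leibniz algebra iff its polarization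
`(•, [ , ])` satisfies `X • (Y • Z) = 0`, the Jacobi identity for `[ , ]`,
`[X, Y • Z] = 0` and `X • [Y, Z] = 0` for all `X, Y, Z`. -/
theorem stmt_13 {K A : Type*} [Field K] [CharZero K] [AddCommGroup A] [Module K A]
    (mul : A →ₗ[K] A →ₗ[K] A)
    (dot br : A → A → A)
    (hdot : ∀ X Y : A, dot X Y = (2 : K)⁻¹ • (mul X Y + mul Y X))
    (hbr : ∀ X Y : A, br X Y = (2 : K)⁻¹ • (mul X Y - mul Y X)) :
    ((∀ X Y Z : A, mul X (mul Y Z) = mul (mul X Y) Z + mul Y (mul X Z)) ∧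
     (∀ X Y Z : A, mul (mul Y Z) X = mul (mul Y X) Z + mul Y (mul Z X))) ↔
    ((∀ X Y Z : A, dot X (dot Y Z) = 0) ∧
     (∀ X Y Z : A, br (br X Y) Z + br (br Y Z) X + br (br Z X) Y = 0) ∧
     (∀ X Y Z : A, br X (dot Y Z) = 0) ∧
     (∀ X Y Z : A, dot X (br Y Z) = 0)) := by
  have hq : ((2:K)⁻¹ * (2:K)⁻¹ : K) ≠ 0 := by norm_num
  have key : ∀ v : A, ((2:K)⁻¹ * (2:K)⁻¹) • v = 0 ↔ v = 0 := by
    intro v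
    constructor
    · intro h
      exact (smul_eq_zero.mp h).resolve_left hq
    · intro h
      rw [h, smul_zero]
  -- expansions of the polarized expressions in terms of `mul`
  have ed : ∀ X Y Z : A, dot X (dot Y Z) =
      ((2:K)⁻¹ * (2:K)⁻¹) •
        (mul X (mul Y Z) + mul X (mul Z Y) + (mul (mul Y Z) X + mul (mul Z Y) X)) := by
    intro X Y Z
    simp only [hdot, map_add, map_smul, map_sub, LinearMap.add_apply, LinearMap.smul_apply,
      LinearMap.sub_apply]
    module
  have ebd : ∀ X Y Z : A, br X (dot Y Z) =
      ((2:K)⁻¹ * (2:K)⁻¹) •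
        (mul X (mul Y Z) + mul X (mul Z Y) - (mul (mul Y Z) X + mul (mul Z Y) X)) := by
    intro X Y Z
    simp only [hdot, hbr, map_add, map_smul, map_sub, LinearMap.add_apply, LinearMap.smul_apply,
      LinearMap.sub_apply]
    module
  have edb : ∀ X Y Z : A, dot X (br Y Z) =
      ((2:K)⁻¹ * (2:K)⁻¹) •
        (mul X (mul Y Z) - mul X (mul Z Y) + (mul (mul Y Z) X - mul (mul Z Y) X)) := by
    intro X Y Z
    simp only [hdot, hbr, map_add, map_smul, map_sub, LinearMap.add_apply, LinearMap.smul_apply,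
      LinearMap.sub_apply]
    module
  have ej : ∀ X Y Z : A, br (br X Y) Z + br (br Y Z) X + br (br Z X) Y =
      ((2:K)⁻¹ * (2:K)⁻¹) •
        ((mul (mul X Y) Z - mul (mul Y X) Z - mul Z (mul X Y) + mul Z (mul Y X)) +
         (mul (mul Y Z) X - mul (mul Z Y) X - mul X (mul Y Z) + mul X (mul Z Y)) +
         (mul (mul Z X) Y - mul (mul X Z) Y - mul Y (mul Z X) + mul Y (mul X Z))) := by
    intro X Y Z
    simp only [hbr, map_add, map_smul, map_sub, LinearMap.add_apply, LinearMap.smul_apply,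
      LinearMap.sub_apply]
    module
  constructor
  · rintro ⟨hL, hR⟩
    refine ⟨fun X Y Z => ?_, fun X Y Z => ?_, fun X Y Z => ?_, fun X Y Z => ?_⟩
    · rw [ed, key]
      linear_combination (norm := module)
        (- hL X Y Z + hR X Y Z + hL X Z Y - hR X Z Y - hL Y X Z - hR Y Z X
          - hR Z X Y - hL Z Y X)
    · rw [ej, key]
      linear_combination (norm := module)
        (- hL X Y Z + hR X Y Z + hL X Z Y - hR X Z Y)
    · rw [ebd, key]
      linear_combination (norm := module)
        (- hL X Y Z + hR X Y Z + hL X Z Y - hR X Z Y - hL Y X Z + (2:K) • hL Y Z X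
          - hR Y Z X - hR Z X Y + hL Z Y X)
    · rw [edb, key]
      linear_combination (norm := module)
        (- hL X Y Z + hR X Y Z + hL X Z Y - hR X Z Y - hL Y X Z + hR Y Z X
          + (2:K) • hL Z X Y - hR Z X Y - hL Z Y X)
  · rintro ⟨h1, h2, h3, h4⟩
    have C1 : ∀ X Y Z : A,
        mul X (mul Y Z) + mul X (mul Z Y) + (mul (mul Y Z) X + mul (mul Z Y) X) = 0 := by
      intro X Y Z
      rw [← key, ← ed]
      exact h1 X Y Z
    have C2 : ∀ X Y Z : A,
        (mul (mul X Y) Z - mul (mul Y X) Z - mul Z (mul X Y) + mul Z (mul Y X)) +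
        (mul (mul Y Z) X - mul (mul Z Y) X - mul X (mul Y Z) + mul X (mul Z Y)) +
        (mul (mul Z X) Y - mul (mul X Z) Y - mul Y (mul Z X) + mul Y (mul X Z)) = 0 := by
      intro X Y Z
      rw [← key, ← ej]
      exact h2 X Y Z
    have C3 : ∀ X Y Z : A,
        mul X (mul Y Z) + mul X (mul Z Y) - (mul (mul Y Z) X + mul (mul Z Y) X) = 0 := by
      intro X Y Z
      rw [← key, ← ebd]
      exact h3 X Y Z
    have C4 : ∀ X Y Z : A,
        mul X (mul Y Z) - mul X (mul Z Y) + (mul (mul Y Z) X - mul (mul Z Y) X) = 0 := by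
      intro X Y Z
      rw [← key, ← edb]
      exact h4 X Y Z
    constructor
    · intro X Y Z
      linear_combination (norm := module)
        ((4:K)⁻¹ • C1 X Y Z - (4:K)⁻¹ • C1 Y X Z - (4:K)⁻¹ • C1 Z X Y
          - (4:K)⁻¹ • C2 X Y Z + (4:K)⁻¹ • C3 X Y Z - (4:K)⁻¹ • C3 Y X Z
          + (4:K)⁻¹ • C3 Z X Y + (4:K)⁻¹ • C4 X Y Z - (4:K)⁻¹ • C4 Y X Z
          - (4:K)⁻¹ • C4 Z X Y)
    · intro X Y Z
      linear_combination (norm := module)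
        ((4:K)⁻¹ • C1 X Y Z - (4:K)⁻¹ • C1 Y X Z - (4:K)⁻¹ • C1 Z X Y
          + (4:K)⁻¹ • C2 X Y Z - (4:K)⁻¹ • C3 X Y Z - (4:K)⁻¹ • C3 Y X Z
          + (4:K)⁻¹ • C3 Z X Y + (4:K)⁻¹ • C4 X Y Z + (4:K)⁻¹ • C4 Y X Z
          + (4:K)⁻¹ • C4 Z X Y)
end

section
/- Let (A,∗) be a symmetric Leibniz algebra over a field K of characteristic 0 and let [X,Y] = (X∗Y − Y∗X)/2 be its polarized skew-symmetric product. Then the Leibniz identity between [ , ] and ∗ holds: [X∗Y, Z] − X∗[Y,Z] − [X,Z]∗Y = 0 for all X,Y,Z ∈ A. -/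
/-- For a symmetric Leibniz algebra, the Leibniz identity between the polarized
bracket `[ , ]` and `∗` holds: `[X∗Y, Z] − X∗[Y,Z] − [X,Z]∗Y = 0`. -/
theorem stmt_14 {K A : Type*} [Field K] [CharZero K] [AddCommGroup A] [Module K A]
    (mul : A →ₗ[K] A →ₗ[K] A)
    (hL1 : ∀ X Y Z : A, mul X (mul Y Z) = mul (mul X Y) Z + mul Y (mul X Z))
    (hL2 : ∀ X Y Z : A, mul (mul Y Z) X = mul (mul Y X) Z + mul Y (mul Z X))
    (br : A → A → A)
    (hbr : ∀ X Y : A, br X Y = (2 : K)⁻¹ • (mul X Y - mul Y X)) :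
    ∀ X Y Z : A, br (mul X Y) Z - mul X (br Y Z) - mul (br X Z) Y = 0 := by
  intro X Y Z
  -- anticommutation: (U∗W)∗V = - V∗(U∗W)
  have h3 : ∀ U W V : A, mul (mul U W) V + mul V (mul U W) = 0 := by
    intro U W V
    have a := hL1 U V W
    have b := hL2 W U V
    calc mul (mul U W) V + mul V (mul U W)
        = (mul (mul U W) V + mul U (mul V W)) + mul V (mul U W) - mul U (mul V W) := by
          abel
      _ = mul (mul U V) W + mul V (mul U W) - mul U (mul V W) := by rw [← b]
      _ = mul U (mul V W) - mul U (mul V W) := by rw [← a]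
      _ = 0 := by abel
  -- Y ∗ (Z∗X + X∗Z) = 0
  have h4 : mul Y (mul Z X) + mul Y (mul X Z) = 0 := by
    have a := hL2 X Y Z
    have b := hL2 Z Y X
    calc mul Y (mul Z X) + mul Y (mul X Z)
        = (mul (mul Y X) Z + mul Y (mul Z X)) + mul Y (mul X Z) - mul (mul Y X) Z := by
          abel
      _ = mul (mul Y Z) X + mul Y (mul X Z) - mul (mul Y X) Z := by rw [← a]
      _ = mul (mul Y Z) X + mul Y (mul X Z)
          - (mul (mul Y Z) X + mul Y (mul X Z)) := by rw [b]
      _ = 0 := by abel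
  have hE : mul (mul X Y) Z - mul Z (mul X Y)
      - (mul X (mul Y Z) - mul X (mul Z Y))
      - (mul (mul X Z) Y - mul (mul Z X) Y) = 0 := by
    have a := hL1 X Y Z
    have b := hL1 X Z Y
    have c := h3 Z X Y  -- mul (mul Z X) Y + mul Y (mul Z X) = 0
    calc mul (mul X Y) Z - mul Z (mul X Y)
          - (mul X (mul Y Z) - mul X (mul Z Y))
          - (mul (mul X Z) Y - mul (mul Z X) Y)
        = mul X (mul Z Y) - mul Z (mul X Y) - mul (mul X Z) Y
            + (mul (mul X Y) Z - mul X (mul Y Z)) + mul (mul Z X) Y := by abel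
      _ = mul X (mul Z Y) - mul Z (mul X Y) - mul (mul X Z) Y
            + (mul (mul X Y) Z - (mul (mul X Y) Z + mul Y (mul X Z)))
            + mul (mul Z X) Y := by rw [← a]
      _ = mul X (mul Z Y) - mul Z (mul X Y) - mul (mul X Z) Y
            - mul Y (mul X Z) + mul (mul Z X) Y := by abel
      _ = (mul (mul X Z) Y + mul Z (mul X Y)) - mul Z (mul X Y) - mul (mul X Z) Y
            - mul Y (mul X Z) + mul (mul Z X) Y := by rw [← b]
      _ = mul (mul Z X) Y - mul Y (mul X Z) := by abel
      _ = -(mul Y (mul Z X)) - mul Y (mul X Z) := by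
            rw [eq_neg_of_add_eq_zero_left c]
      _ = -(mul Y (mul Z X) + mul Y (mul X Z)) := by abel
      _ = 0 := by rw [h4, neg_zero]
  simp only [hbr, map_sub, map_smul, LinearMap.sub_apply, LinearMap.smul_apply]
  rw [← smul_sub, ← smul_sub, hE, smul_zero]
end

section
/- Let A be a K-vector space over a field K of characteristic 0 with a commutative associative bilinear multiplication ∗. Then (A,∗) is a symmetric Leibniz algebra if and only if (A,∗) is two-step nilpotent, i.e. X∗(Y∗Z) = 0 for all X,Y,Z ∈ A. -/
/-- A commutative associative algebra `(A, ∗)` is a symmetric Leibniz algebra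
iff it is two-step nilpotent, i.e. `X∗(Y∗Z) = 0` for all `X, Y, Z`. -/
theorem stmt_15 {K A : Type*} [Field K] [CharZero K] [AddCommGroup A] [Module K A]
    (mul : A →ₗ[K] A →ₗ[K] A)
    (hcomm : ∀ X Y : A, mul X Y = mul Y X)
    (hassoc : ∀ X Y Z : A, mul X (mul Y Z) = mul (mul X Y) Z) :
    ((∀ X Y Z : A, mul X (mul Y Z) = mul (mul X Y) Z + mul Y (mul X Z)) ∧
     (∀ X Y Z : A, mul (mul Y Z) X = mul (mul Y X) Z + mul Y (mul Z X))) ↔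
    (∀ X Y Z : A, mul X (mul Y Z) = 0) := by
  constructor
  · rintro ⟨h1, _⟩ X Y Z
    have key : mul Y (mul X Z) = mul X (mul Y Z) := by
      rw [hassoc Y X Z, hcomm Y X, ← hassoc X Y Z]
    have h := h1 X Y Z
    rw [key, ← hassoc X Y Z] at h
    have : mul X (mul Y Z) + mul X (mul Y Z) = mul X (mul Y Z) + 0 := by
      rw [add_zero]; exact h.symm
    exact (add_left_cancel this)
  · intro h
    constructor
    · intro X Y Z
      rw [h X Y Z, h Y X Z, ← hassoc X Y Z, h X Y Z, add_zero]
    · intro X Y Z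
      rw [hcomm (mul Y Z) X, h X Y Z, hcomm (mul Y X) Z, h Z Y X, h Y Z X, add_zero]
end

section
/- Let g₁ be a Lie algebra over a field K of characteristic 0, let w ∈ g₁ be an element of the center of g₁, and let D be a derivation of g₁ with D(w) = 0. Define on A = K × g₁ the bilinear multiplication (a,x) ∗ (b,y) = (0, ab·w + a·D(y) − b·D(x) + [x,y]). Then (A,∗) is a symmetric Leibniz algebra. -/
/-- Let `g₁` be a Lie algebra over a field `K` of characteristic zero, `w` a central
element, and `D` a derivation of `g₁` with `D w = 0`. Then the multiplication
`(a,x) ∗ (b,y) = (0, ab•w + a•D y − b•D x + ⁅x,y⁆)` on `K × g₁` makes it a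
symmetric Leibniz algebra. -/
theorem stmt_16 {K g₁ : Type*} [Field K] [CharZero K]
    [LieRing g₁] [LieAlgebra K g₁]
    (w : g₁) (hw : ∀ x : g₁, ⁅w, x⁆ = 0)
    (D : g₁ →ₗ[K] g₁)
    (hD : ∀ x y : g₁, D ⁅x, y⁆ = ⁅D x, y⁆ + ⁅x, D y⁆)
    (hDw : D w = 0)
    (star : K × g₁ → K × g₁ → K × g₁)
    (hstar : ∀ p q : K × g₁,
      star p q = (0, (p.1 * q.1) • w + p.1 • D q.2 - q.1 • D p.2 + ⁅p.2, q.2⁆)) :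
    (∀ X Y Z : K × g₁, star X (star Y Z) = star (star X Y) Z + star Y (star X Z)) ∧
    (∀ X Y Z : K × g₁, star (star Y Z) X = star (star Y X) Z + star Y (star Z X)) := by
  have hw' : ∀ x : g₁, ⁅x, w⁆ = 0 := fun x => by
    rw [← lie_skew, hw, neg_zero]
  have hskew : ∀ a b : g₁, ⁅D a, b⁆ = -⁅b, D a⁆ := fun a b => (lie_skew _ _).symm
  constructor <;> intro X Y Z <;>
    simp only [hstar, Prod.mk_add_mk, Prod.mk.injEq, zero_add, mul_zero, zero_mul,
      map_add, map_sub, map_smul, hD, hDw, smul_zero, lie_add, add_lie, lie_sub, sub_lie,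
      lie_smul, smul_lie, hw, hw', lie_lie, hskew, lie_self, smul_neg] <;>
    refine ⟨trivial, ?_⟩
  · module
  · linear_combination (norm := module) lie_skew ⁅Y.2, X.2⁆ Z.2 + lie_lie Y.2 X.2 Z.2
end

section
/- Let (A,∗) be a commutative symmetric Leibniz algebra over a field K of characteristic 0 and let φ₁ : A × A → A be a bilinear map satisfying δφ₁⁽¹⁾ = 0 and δφ₁⁽²⁾ = 0, where δφ⁽¹⁾(X,Y,Z) = φ(X, Y∗Z) − φ(X∗Y, Z) − φ(Y, X∗Z) + X∗φ(Y,Z) − φ(X,Y)∗Z − Y∗φ(X,Z) and δφ⁽²⁾(X,Y,Z) = φ(Y, Z∗X) − φ(Y∗Z, X) + φ(Y∗X, Z) + Y∗φ(Z,X) − φ(Y,Z)∗X + φ(Y,X)∗Z. Then the skew-symmetric map ψ(X,Y) = (φ₁(X,Y) − φ₁(Y,X))/2 satisfies the Leibniz identity with respect to ∗: ψ(X, Y∗Z) = ψ(X,Y)∗Z + Y∗ψ(X,Z) for all X,Y,Z ∈ A. -/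
/-- Let `(A, ∗)` be a commutative symmetric Leibniz algebra and `φ₁` a bilinear map
with `δφ₁⁽¹⁾ = 0` and `δφ₁⁽²⁾ = 0`. Then the skew-symmetric map
`ψ(X,Y) = (φ₁(X,Y) − φ₁(Y,X))/2` satisfies the Leibniz identity with respect to `∗`. -/
theorem stmt_17 {K A : Type*} [Field K] [CharZero K] [AddCommGroup A] [Module K A]
    (m : A →ₗ[K] A →ₗ[K] A)
    (hcomm : ∀ X Y : A, m X Y = m Y X)
    (hL1 : ∀ X Y Z : A, m X (m Y Z) = m (m X Y) Z + m Y (m X Z))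
    (hL2 : ∀ X Y Z : A, m (m Y Z) X = m (m Y X) Z + m Y (m Z X))
    (f : A →ₗ[K] A →ₗ[K] A)
    (hδ1 : ∀ X Y Z : A,
      f X (m Y Z) - f (m X Y) Z - f Y (m X Z)
        + m X (f Y Z) - m (f X Y) Z - m Y (f X Z) = 0)
    (hδ2 : ∀ X Y Z : A,
      f Y (m Z X) - f (m Y Z) X + f (m Y X) Z
        + m Y (f Z X) - m (f Y Z) X + m (f Y X) Z = 0)
    (ψ : A → A → A)
    (hψ : ∀ X Y : A, ψ X Y = (2 : K)⁻¹ • (f X Y - f Y X)) :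
    ∀ X Y Z : A, ψ X (m Y Z) = m (ψ X Y) Z + m Y (ψ X Z) := by
  intro X Y Z
  have h1 := hδ1 X Y Z
  have h2 := hδ2 X Y Z
  have c1 : m X (f Y Z) = m (f Y Z) X := hcomm _ _
  have c2 : f (m X Y) Z = f (m Y X) Z := by rw [hcomm]
  have c3 : f Y (m X Z) = f Y (m Z X) := by rw [hcomm]
  simp only [hψ, map_smul, LinearMap.smul_apply, map_sub, LinearMap.sub_apply, ← smul_add]
  congr 1
  linear_combination (norm := abel) h1 + h2 - c1 + c2 + c3
end

section
/- Let (A,∗) be a commutative symmetric Leibniz algebra over a field K of characteristic 0, let φ₁ : A × A → A be a bilinear map with δφ₁⁽¹⁾ = 0 and δφ₁⁽²⁾ = 0, and suppose there exists a bilinear map φ₂ : A × A → A such that for all X,Y,Z ∈ A: A_{φ₁}(X,Y,Z) − φ₁(Y, φ₁(X,Z)) + δφ₂⁽¹⁾(X,Y,Z) = 0 and A_{φ₁}(Y,Z,X) + φ₁(φ₁(Y,X), Z) + δφ₂⁽²⁾(X,Y,Z) = 0, where A_{φ₁}(X,Y,Z) = φ₁(X, φ₁(Y,Z)) − φ₁(φ₁(X,Y),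 Z). Then the skew-symmetric map ψ(X,Y) = (φ₁(X,Y) − φ₁(Y,X))/2 satisfies the Jacobi identity ψ(ψ(X,Y),Z) + ψ(ψ(Y,Z),X) + ψ(ψ(Z,X),Y) = 0 for all X,Y,Z ∈ A; that is, φ₁ is Lie-admissible. -/
/-- Order-two condition of a symmetric Leibniz formal deformation of a commutative
symmetric Leibniz algebra: the skew-symmetric part `ψ` of `φ₁` satisfies the Jacobi
identity, i.e. `φ₁` is Lie-admissible. -/
theorem stmt_18 {K A : Type*} [Field K] [CharZero K] [AddCommGroup A] [Module K A]
    (m : A →ₗ[K] A →ₗ[K] A)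
    (hcomm : ∀ X Y : A, m X Y = m Y X)
    (hL1 : ∀ X Y Z : A, m X (m Y Z) = m (m X Y) Z + m Y (m X Z))
    (hL2 : ∀ X Y Z : A, m (m Y Z) X = m (m Y X) Z + m Y (m Z X))
    (f : A →ₗ[K] A →ₗ[K] A)
    (hδ1 : ∀ X Y Z : A,
      f X (m Y Z) - f (m X Y) Z - f Y (m X Z)
        + m X (f Y Z) - m (f X Y) Z - m Y (f X Z) = 0)
    (hδ2 : ∀ X Y Z : A,
      f Y (m Z X) - f (m Y Z) X + f (m Y X) Z
        + m Y (f Z X) - m (f Y Z) X + m (f Y X) Z = 0)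
    (g : A →ₗ[K] A →ₗ[K] A)
    (hord2a : ∀ X Y Z : A,
      (f X (f Y Z) - f (f X Y) Z) - f Y (f X Z)
        + (g X (m Y Z) - g (m X Y) Z - g Y (m X Z)
            + m X (g Y Z) - m (g X Y) Z - m Y (g X Z)) = 0)
    (hord2b : ∀ X Y Z : A,
      (f Y (f Z X) - f (f Y Z) X) + f (f Y X) Z
        + (g Y (m Z X) - g (m Y Z) X + g (m Y X) Z
            + m Y (g Z X) - m (g Y Z) X + m (g Y X) Z) = 0)
    (ψ : A → A → A)
    (hψ : ∀ X Y : A, ψ X Y = (2 : K)⁻¹ • (f X Y - f Y X)) :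
    ∀ X Y Z : A, ψ (ψ X Y) Z + ψ (ψ Y Z) X + ψ (ψ Z X) Y = 0 := by

  intro X Y Z
  have e1 := hord2a X Y Z
  have e2 := hord2b X Y Z
  have e3 := hord2a X Z Y
  have e4 := hord2b X Z Y
  simp only [hψ, map_smul, map_sub, LinearMap.smul_apply, LinearMap.sub_apply]
  have s1 : ∀ a b c : A, g (m a b) c = g (m b a) c := fun a b c => by rw [hcomm a b]
  have s2 : ∀ a b c : A, g a (m b c) = g a (m c b) := fun a b c => by rw [hcomm b c]
  have s3 : ∀ a b c : A, m (g a b) c = m c (g a b) := fun a b c => hcomm _ _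
  linear_combination (norm := module) ((2:K)⁻¹ * (2:K)⁻¹) •
    (-e1 - e2 + e3 + e4
      - s1 X Y Z + s2 X Y Z - s3 X Y Z
      + s1 X Z Y + s3 X Z Y
      - s2 Y X Z + s3 Y X Z
      - s1 Y Z X - s3 Y Z X
      + s2 Z X Y - s3 Z X Y
      + s3 Z Y X)
end

section
/- Let (A,∗) be a commutative symmetric Leibniz algebra over a field K of characteristic 0, let φ₁ : A × A → A be a bilinear map with δφ₁⁽¹⁾ = 0 and δφ₁⁽²⁾ = 0, and suppose there exists a bilinear map φ₂ : A × A → A such that for all X,Y,Z ∈ A: A_{φ₁}(X,Y,Z) − φ₁(Y, φ₁(X,Z)) + δφ₂⁽¹⁾(X,Y,Z) = 0 and A_{φ₁}(Y,Z,X) + φ₁(φ₁(Y,X), Z) + δφ₂⁽²⁾(X,Y,Z) = 0, where A_{φ₁}(X,Y,Z) = φ₁(X, φ₁(Y,Z)) − φ₁(φ₁(X,Y), Z). Then the skew-symmetric map ψ(X,Y) = (φ₁(X,Y) − φ₁(Y,X))/2 satisfies ψ(X,Y)∗Z − ψ(Z,X)∗Y = 0 for all X,Y,Z ∈ A. -/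
/-- Order-two condition of a symmetric Leibniz formal deformation of a commutative
symmetric Leibniz algebra: the skew-symmetric part `ψ` of `φ₁` satisfies
`ψ(X,Y)∗Z − ψ(Z,X)∗Y = 0`. -/
theorem stmt_19 {K A : Type*} [Field K] [CharZero K] [AddCommGroup A] [Module K A]
    (m : A →ₗ[K] A →ₗ[K] A)
    (hcomm : ∀ X Y : A, m X Y = m Y X)
    (hL1 : ∀ X Y Z : A, m X (m Y Z) = m (m X Y) Z + m Y (m X Z))
    (hL2 : ∀ X Y Z : A, m (m Y Z) X = m (m Y X) Z + m Y (m Z X))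
    (f : A →ₗ[K] A →ₗ[K] A)
    (hδ1 : ∀ X Y Z : A,
      f X (m Y Z) - f (m X Y) Z - f Y (m X Z)
        + m X (f Y Z) - m (f X Y) Z - m Y (f X Z) = 0)
    (hδ2 : ∀ X Y Z : A,
      f Y (m Z X) - f (m Y Z) X + f (m Y X) Z
        + m Y (f Z X) - m (f Y Z) X + m (f Y X) Z = 0)
    (g : A →ₗ[K] A →ₗ[K] A)
    (hord2a : ∀ X Y Z : A,
      (f X (f Y Z) - f (f X Y) Z) - f Y (f X Z)
        + (g X (m Y Z) - g (m X Y) Z - g Y (m X Z)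
            + m X (g Y Z) - m (g X Y) Z - m Y (g X Z)) = 0)
    (hord2b : ∀ X Y Z : A,
      (f Y (f Z X) - f (f Y Z) X) + f (f Y X) Z
        + (g Y (m Z X) - g (m Y Z) X + g (m Y X) Z
            + m Y (g Z X) - m (g Y Z) X + m (g Y X) Z) = 0)
    (ψ : A → A → A)
    (hψ : ∀ X Y : A, ψ X Y = (2 : K)⁻¹ • (f X Y - f Y X)) :
    ∀ X Y Z : A, m (ψ X Y) Z - m (ψ Z X) Y = 0 := by
  have key : ∀ X Y Z : A, m (f X Y) Z = m (f Y X) Z := by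
    intro X Y Z
    have h2 := hδ2 X Y Z
    have h1 := hδ1 Y Z X
    have h2' := hδ2 Y X Z
    have h1' := hδ1 X Z Y
    rw [hcomm Z (f Y X)] at h1
    rw [hcomm Z (f X Y)] at h1'
    have e1 : f (m Y X) Z + f Z (m Y X) + m (f Y X) Z + m (f Y X) Z = 0 := by
      have h : f (m Y X) Z + f Z (m Y X) + m (f Y X) Z + m (f Y X) Z
          = (f Y (m Z X) - f (m Y Z) X + f (m Y X) Z
              + m Y (f Z X) - m (f Y Z) X + m (f Y X) Z)
            - (f Y (m Z X) - f (m Y Z) X - f Z (m Y X)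
              + m Y (f Z X) - m (f Y Z) X - m (f Y X) Z) := by abel
      rw [h, h2, h1, sub_zero]
    have e2 : f (m X Y) Z + f Z (m X Y) + m (f X Y) Z + m (f X Y) Z = 0 := by
      have h : f (m X Y) Z + f Z (m X Y) + m (f X Y) Z + m (f X Y) Z
          = (f X (m Z Y) - f (m X Z) Y + f (m X Y) Z
              + m X (f Z Y) - m (f X Z) Y + m (f X Y) Z)
            - (f X (m Z Y) - f (m X Z) Y - f Z (m X Y)
              + m X (f Z Y) - m (f X Z) Y - m (f X Y) Z) := by abel
      rw [h, h2', h1', sub_zero]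
    rw [hcomm Y X] at e1
    have e4 : m (f X Y) Z + m (f X Y) Z - (m (f Y X) Z + m (f Y X) Z) = 0 := by
      have h : m (f X Y) Z + m (f X Y) Z - (m (f Y X) Z + m (f Y X) Z)
          = (f (m X Y) Z + f Z (m X Y) + m (f X Y) Z + m (f X Y) Z)
            - (f (m X Y) Z + f Z (m X Y) + m (f Y X) Z + m (f Y X) Z) := by abel
      rw [h, e1, e2, sub_zero]
    have e5 : (2 : K) • (m (f X Y) Z - m (f Y X) Z) = 0 := by
      rw [two_smul, ← e4]; abel
    rcases smul_eq_zero.mp e5 with h | h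
    · exact absurd h two_ne_zero
    · exact (sub_eq_zero.mp h).symm ▸ rfl
  intro X Y Z
  rw [hψ X Y, hψ Z X]
  simp only [map_smul, LinearMap.smul_apply, map_sub, LinearMap.sub_apply]
  rw [key X Y Z, key Z X Y]
  simp
end
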